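/- Let L ≥ 1 and A ≥ 0 be real constants, and let n be a positive integer with n > L² + 2LA. If f : B_n → ℤ is an (L,A)-quasi-isometric embedding, then either f(−n) < f(0) < f(n) or f(n) < f(0) < f(−n). -/
import Mathlib

/-- Discrete IVT (decreasing crossing): if consecutive steps are ≤ C, `f a ≥ t`, `f (a+m) ≤ t`,
then some point in between has value within `C` of `t`. -/
lemma ivt_dec_aux (C : ℝ) (hC : 0 ≤ C) (f : ℤ → ℤ) (t : ℤ) :
    ∀ m : ℕ, ∀ a : ℤ,
      (∀ k : ℤ, a ≤ k → k < a + m → |((f (k+1) : ℝ)) - (f k : ℝ)| ≤ C) →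
      t ≤ f a → f (a + m) ≤ t →
      ∃ k : ℤ, a ≤ k ∧ k ≤ a + m ∧ |((f k : ℝ)) - (t : ℝ)| ≤ C := by
  intro m
  induction m with
  | zero =>
    intro a _ h1 h2
    have hfa : f a = t := le_antisymm (by simpa using h2) h1
    exact ⟨a, le_refl _, by simp, by simp [hfa, hC]⟩
  | succ m ih =>
    intro a hstep h1 h2
    by_cases hc : t ≤ f (a + 1)
    · obtain ⟨k, hk1, hk2, hk3⟩ := ih (a + 1)
        (fun k hk hk' => hstep k (by omega) (by push_cast at hk' ⊢; omega)) hc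
        (by have : a + 1 + (m : ℤ) = a + ((m : ℕ) + 1 : ℕ) := by push_cast; ring
            rw [this]; exact h2)
      exact ⟨k, by omega, by push_cast at hk2 ⊢; omega, hk3⟩
    · push_neg at hc
      refine ⟨a, le_refl _, by push_cast; omega, ?_⟩
      have hs := hstep a (le_refl _) (by push_cast; omega)
      have h1' : (t : ℝ) ≤ f a := by exact_mod_cast h1
      have hc' : (f (a+1) : ℝ) < t := by exact_mod_cast hc
      have := neg_abs_le ((f (a+1) : ℝ) - f a)
      rw [abs_of_nonneg (by linarith)]
      linarith

lemma ivt_dec (C : ℝ) (hC : 0 ≤ C) (f : ℤ → ℤ) (t : ℤ) (a b : ℤ) (hab : a ≤ b)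
    (hstep : ∀ k : ℤ, a ≤ k → k < b → |((f (k+1) : ℝ)) - (f k : ℝ)| ≤ C)
    (h1 : t ≤ f a) (h2 : f b ≤ t) :
    ∃ k : ℤ, a ≤ k ∧ k ≤ b ∧ |((f k : ℝ)) - (t : ℝ)| ≤ C := by
  obtain ⟨m, hm⟩ := Int.le.dest hab
  subst hm
  exact ivt_dec_aux C hC f t m a hstep h1 h2

lemma ivt_inc (C : ℝ) (hC : 0 ≤ C) (f : ℤ → ℤ) (t : ℤ) (a b : ℤ) (hab : a ≤ b)
    (hstep : ∀ k : ℤ, a ≤ k → k < b → |((f (k+1) : ℝ)) - (f k : ℝ)| ≤ C)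
    (h1 : f a ≤ t) (h2 : t ≤ f b) :
    ∃ k : ℤ, a ≤ k ∧ k ≤ b ∧ |((f k : ℝ)) - (t : ℝ)| ≤ C := by
  obtain ⟨k, hk1, hk2, hk3⟩ := ivt_dec C hC (fun k => - f k) (-t) a b hab
    (fun k hk hk' => by
      have := hstep k hk hk'
      push_cast
      rw [show -(f (k+1) : ℝ) - (-(f k : ℝ)) = -((f (k+1) : ℝ) - (f k : ℝ)) by ring, abs_neg]
      exact this)
    (by simpa using h1) (by simpa using h2)
  refine ⟨k, hk1, hk2, ?_⟩
  have : |(-(f k : ℝ)) - (-(t : ℝ))| ≤ C := by push_cast at hk3 ⊢; exact hk3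
  rwa [show (-(f k : ℝ)) - (-(t : ℝ)) = -((f k : ℝ) - t) by ring, abs_neg] at this

theorem stmt1 (L A : ℝ) (hL : 1 ≤ L) (hA : 0 ≤ A) (n : ℤ) (hn : 0 < n)
    (hbig : L ^ 2 + 2 * L * A < (n : ℝ)) (f : ℤ → ℤ)
    (hf : ∀ a b : ℤ, |a| ≤ n → |b| ≤ n →
      (1 / L) * |(a : ℝ) - (b : ℝ)| - A ≤ |(f a : ℝ) - (f b : ℝ)| ∧
      |(f a : ℝ) - (f b : ℝ)| ≤ L * |(a : ℝ) - (b : ℝ)| + A) :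
    (f (-n) < f 0 ∧ f 0 < f n) ∨ (f n < f 0 ∧ f 0 < f (-n)) := by
  have hL0 : (0 : ℝ) < L := by linarith
  have hn' : (0 : ℝ) < (n : ℝ) := by exact_mod_cast hn
  have hC : (0 : ℝ) ≤ L + A := by linarith
  -- step bound
  have hstep : ∀ k : ℤ, -n ≤ k → k < n → |((f (k+1) : ℝ)) - (f k : ℝ)| ≤ L + A := by
    intro k hk1 hk2
    have h := (hf (k+1) k (by rw [abs_le]; omega) (by rw [abs_le]; omega)).2
    have : |((k+1 : ℤ) : ℝ) - (k : ℝ)| = 1 := by push_cast; simp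
    rw [this] at h
    linarith
  -- final numeric contradiction maker
  have contra : ∀ k j : ℤ, |k| ≤ n → |j| ≤ n → (n : ℝ) ≤ |(k : ℝ) - (j : ℝ)| →
      |(f k : ℝ) - (f j : ℝ)| ≤ L + A → False := by
    intro k j hk hj hdist hclose
    have h := (hf k j hk hj).1
    have h1 : (1 / L) * (n : ℝ) ≤ (1 / L) * |(k : ℝ) - (j : ℝ)| :=
      mul_le_mul_of_nonneg_left hdist (by positivity)
    have h2 : (1 / L) * (n : ℝ) - A ≤ L + A := by linarith
    have h3 : (n : ℝ) ≤ L * (L + A + A) := by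
      have := mul_le_mul_of_nonneg_left h2 hL0.le
      rw [mul_sub, ← mul_assoc, mul_one_div_cancel hL0.ne', one_mul] at this
      linarith
    nlinarith
  -- f(±n) ≠ f 0
  have hne : ∀ j : ℤ, |j| ≤ n → |(j : ℝ)| = n → f j ≠ f 0 := by
    intro j hj habs hEq
    have h := (hf j 0 hj (by rw [abs_le]; omega)).1
    rw [show ((0:ℤ):ℝ) = 0 by simp, sub_zero, habs, hEq, sub_self, abs_zero] at h
    have : (n : ℝ) ≤ L * A := by
      have := mul_le_mul_of_nonneg_left (by linarith : (1/L) * (n:ℝ) ≤ A) hL0.le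
      rw [← mul_assoc, mul_one_div_cancel hL0.ne', one_mul] at this
      exact this
    nlinarith
  have habs_n : |((n : ℤ) : ℝ)| = (n : ℝ) := abs_of_pos hn'
  have habs_nn : |((-n : ℤ) : ℝ)| = (n : ℝ) := by push_cast; rw [abs_neg]; exact habs_n
  have hnn : |(-n : ℤ)| ≤ n := by rw [abs_le]; omega
  have hpn : |(n : ℤ)| ≤ n := by rw [abs_le]; omega
  have h0 : |(0 : ℤ)| ≤ n := by rw [abs_le]; omega
  have hp : f (-n) ≠ f 0 := hne (-n) hnn habs_nn
  have hr : f n ≠ f 0 := hne n hpn habs_n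
  rcases lt_or_gt_of_ne hp with hp1 | hp1 <;> rcases lt_or_gt_of_ne hr with hr1 | hr1
  · -- both below f 0 : contradiction
    exfalso
    rcases le_or_gt (f n) (f (-n)) with hc | hc
    · -- f n ≤ f(-n) < f 0 : on [0,n], f 0 ≥ f(-n) ≥ f n, decreasing crossing t = f(-n)
      obtain ⟨k, hk1, hk2, hk3⟩ := ivt_dec (L + A) hC f (f (-n)) 0 n hn.le
        (fun k hk hk' => hstep k (by omega) hk') (le_of_lt hp1) hc
      exact contra k (-n) (by rw [abs_le]; omega) hnn
        (by push_cast
            have hk' : (0:ℝ) ≤ (k:ℝ) := by exact_mod_cast hk1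
            rw [abs_of_nonneg (by linarith)]; linarith) hk3
    · -- f(-n) < f n < f 0 : on [-n,0], f(-n) ≤ f n ≤ f 0, increasing crossing t = f n
      obtain ⟨k, hk1, hk2, hk3⟩ := ivt_inc (L + A) hC f (f n) (-n) 0 (by omega)
        (fun k hk hk' => hstep k hk (by omega)) hc.le (le_of_lt hr1)
      exact contra k n (by rw [abs_le]; omega) hpn
        (by have hk' : (k:ℝ) ≤ 0 := by exact_mod_cast hk2
            rw [abs_sub_comm, abs_of_nonneg (by linarith)]; linarith) hk3
  · exact Or.inl ⟨hp1, hr1⟩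
  · exact Or.inr ⟨hr1, hp1⟩
  · -- both above f 0 : contradiction
    exfalso
    rcases le_or_gt (f n) (f (-n)) with hc | hc
    · -- f 0 < f n ≤ f(-n): on [-n,0], decreasing crossing t = f n
      obtain ⟨k, hk1, hk2, hk3⟩ := ivt_dec (L + A) hC f (f n) (-n) 0 (by omega)
        (fun k hk hk' => hstep k hk (by omega)) hc (le_of_lt hr1)
      exact contra k n (by rw [abs_le]; omega) hpn
        (by have hk' : (k:ℝ) ≤ 0 := by exact_mod_cast hk2
            rw [abs_sub_comm, abs_of_nonneg (by linarith)]; linarith) hk3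
    · -- f 0 < f(-n) < f n: on [0,n], increasing crossing t = f(-n)
      obtain ⟨k, hk1, hk2, hk3⟩ := ivt_inc (L + A) hC f (f (-n)) 0 n hn.le
        (fun k hk hk' => hstep k (by omega) hk') (le_of_lt hp1) hc.le
      exact contra k (-n) (by rw [abs_le]; omega) hnn
        (by push_cast
            have hk' : (0:ℝ) ≤ (k:ℝ) := by exact_mod_cast hk1
            rw [abs_of_nonneg (by linarith)]; linarith) hk3
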